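/- Let α > 0, s > 0, q = e^{−s}, and j ∈ ℤ. For m ∈ ℕ let p_m = (Γ(α+m)/(Γ(α) m!)) (1−q)^α q^m be the negative binomial probability mass function with parameters (α, q), and set p_m = 0 for m < 0. Then ∫_0^1 ( (cosh(s) − 1)/(cosh(s) − cos(2πω)) )^α e^{−2πi j ω} dω = Σ_{m=0}^∞ p_m p_{m+j}. In particular, the left-hand side is the probability that X − Y = j for X, Y independent, each negative binomial with parameters (α, e^{−s}). -/

import Mathlib

open scoped BigOperators

open Complex Finset MeasureTheory


lemma slit_aux {z : ℂ} (hz : ‖z‖ < 1) : 1 - z ∈ Complex.slitPlane := by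
  rw [Complex.mem_slitPlane_iff]
  left
  have h := Complex.abs_re_le_norm z
  have : z.re ≤ ‖z‖ := le_trans (le_abs_self _) h
  simp only [Complex.sub_re, Complex.one_re]
  linarith

lemma hasDerivAt_aux (c : ℂ) {z : ℂ} (hz : ‖z‖ < 1) :
    HasDerivAt (fun w => (1 - w) ^ c) (-(c * (1 - z) ^ (c - 1))) z := by
  have h1 : HasDerivAt (fun w : ℂ => 1 - w) (-1) z := by
    simpa using (hasDerivAt_id z).const_sub 1
  have h2 := h1.cpow_const (c := c) (slit_aux hz)
  simpa using h2

lemma iteratedDeriv_aux (c : ℂ) (n : ℕ) {z : ℂ} (hz : ‖z‖ < 1) :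
    iteratedDeriv n (fun w => (1 - w) ^ c) z
      = (∏ k ∈ Finset.range n, ((k : ℂ) - c)) * (1 - z) ^ (c - n) := by
  induction n generalizing z with
  | zero => simp
  | succ n ih =>
      rw [iteratedDeriv_succ]
      have hev : (iteratedDeriv n (fun w => (1 - w) ^ c))
          =ᶠ[nhds z] fun w => (∏ k ∈ Finset.range n, ((k : ℂ) - c)) * (1 - w) ^ (c - n) := by
        filter_upwards [Metric.ball_mem_nhds z (by linarith [norm_nonneg z] : (0:ℝ) < 1 - ‖z‖)]
          with w hw
        have hw' : ‖w‖ < 1 := by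
          have := mem_ball_iff_norm.mp hw
          calc ‖w‖ ≤ ‖w - z‖ + ‖z‖ := by simpa using norm_add_le (w - z) z
          _ < 1 := by linarith
        exact ih hw'
      rw [hev.deriv_eq]
      have hd : HasDerivAt (fun w => (∏ k ∈ Finset.range n, ((k : ℂ) - c)) * (1 - w) ^ (c - n))
          ((∏ k ∈ Finset.range n, ((k : ℂ) - c)) * -((c - n) * (1 - z) ^ (c - n - 1))) z :=
        (hasDerivAt_aux (c - n) hz).const_mul _
      rw [hd.deriv, Finset.prod_range_succ]
      push_cast
      ring_nf
      rw [show (∏ x ∈ Finset.range n, (-c + (x:ℂ))) = ∏ x ∈ Finset.range n, ((x:ℂ) - c) from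
        Finset.prod_congr rfl (fun _ _ => by ring)]
      ring


lemma Gamma_prod (α : ℝ) (hα : 0 < α) (n : ℕ) :
    Real.Gamma (α + n) = Real.Gamma α * ∏ k ∈ Finset.range n, (α + k) := by
  induction n with
  | zero => simp
  | succ n ih =>
      have h1 : α + (n + 1 : ℕ) = (α + n) + 1 := by push_cast; ring
      have h2 : (0:ℝ) < α + n := by positivity
      rw [h1, Real.Gamma_add_one (ne_of_gt h2), ih, Finset.prod_range_succ]
      ring


lemma hasSum_binomial (α : ℝ) (hα : 0 < α) {z : ℂ} (hz : ‖z‖ < 1) :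
    HasSum (fun n : ℕ =>
        ((Real.Gamma (α + n) / (Real.Gamma α * n.factorial) : ℝ) : ℂ) * z ^ n)
      ((1 - z) ^ (-(α:ℂ))) := by
  have hdiff : DifferentiableOn ℂ (fun w : ℂ => (1 - w) ^ (-(α:ℂ))) (Metric.ball 0 1) := by
    intro w hw
    have hw' : ‖w‖ < 1 := by simpa using Metric.mem_ball.mp hw
    exact ((hasDerivAt_aux (-(α:ℂ)) hw').differentiableAt).differentiableWithinAt
  have hz' : z ∈ Metric.ball (0:ℂ) 1 := by simpa using hz
  have H := Complex.hasSum_taylorSeries_on_ball hdiff hz'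
  have hΓ : Real.Gamma α ≠ 0 := ne_of_gt (Real.Gamma_pos_of_pos hα)
  convert H using 2 with n
  case e'_3 => rfl
  rw [iteratedDeriv_aux (-(α:ℂ)) n (by simp)]
  have hprod : (∏ k ∈ Finset.range n, ((k : ℂ) - -(α:ℂ)))
      = ((Real.Gamma (α + n) / Real.Gamma α : ℝ) : ℂ) := by
    rw [Gamma_prod α hα n, mul_comm, mul_div_assoc, div_self hΓ, mul_one]
    push_cast
    exact Finset.prod_congr rfl (fun k _ => by ring)
  simp only [sub_zero, one_cpow, mul_one, smul_eq_mul]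
  rw [hprod]
  have hn : ((n.factorial : ℝ) : ℂ) ≠ 0 := by
    exact_mod_cast Nat.cast_ne_zero.mpr (Nat.factorial_ne_zero n)
  push_cast
  field_simp


lemma integral_E (k : ℤ) :
    (∫ ω in (0:ℝ)..1, Complex.exp (2 * Real.pi * Complex.I * k * ω))
      = if k = 0 then 1 else 0 := by
  rcases eq_or_ne k 0 with hk | hk
  · simp [hk]
  · have hc : (2 * (Real.pi:ℂ) * Complex.I * k) ≠ 0 := by
      have : (k:ℂ) ≠ 0 := Int.cast_ne_zero.mpr hk
      simp [Complex.I_ne_zero, Real.pi_ne_zero, this]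
    rw [show (fun ω : ℝ => Complex.exp (2 * Real.pi * Complex.I * k * ω))
        = fun ω : ℝ => Complex.exp ((2 * (Real.pi:ℂ) * Complex.I * k) * ω) from rfl]
    rw [integral_exp_mul_complex hc]
    have h1 : (2 * (Real.pi:ℂ) * Complex.I * k) * (1:ℝ) = k * (2 * Real.pi * Complex.I) := by
      push_cast; ring
    have h2 : (2 * (Real.pi:ℂ) * Complex.I * k) * (0:ℝ) = 0 := by push_cast; ring
    rw [h1, h2, Complex.exp_int_mul_two_pi_mul_I, Complex.exp_zero, if_neg hk]
    simp


lemma integrand_eq (α s : ℝ) (hα : 0 < α) (hs : 0 < s) (ω : ℝ) :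
    ((((Real.cosh s - 1) / (Real.cosh s - Real.cos (2 * Real.pi * ω))) ^ α : ℝ) : ℂ)
      = (((1 - Real.exp (-s)) ^ (2*α) : ℝ) : ℂ)
        * (((1 - (Real.exp (-s) : ℂ) * Complex.exp (2*Real.pi*Complex.I*ω)) ^ (-(α:ℂ)))
           * (starRingEnd ℂ) ((1 - (Real.exp (-s):ℂ) * Complex.exp (2*Real.pi*Complex.I*ω)) ^ (-(α:ℂ)))) := by
  set q : ℝ := Real.exp (-s) with hqdef
  have hq0 : 0 < q := Real.exp_pos _
  have hq1 : q < 1 := by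
    rw [hqdef]; exact Real.exp_lt_one_iff.mpr (by linarith)
  set θ : ℝ := 2 * Real.pi * ω with hθdef
  have hexp : Complex.exp (2*Real.pi*Complex.I*ω)
      = (Real.cos θ : ℂ) + (Real.sin θ : ℂ) * Complex.I := by
    rw [show (2*(Real.pi:ℂ)*Complex.I*(ω:ℝ)) = ((θ:ℝ):ℂ) * Complex.I by push_cast [hθdef]; ring,
      Complex.exp_mul_I, ← Complex.ofReal_cos, ← Complex.ofReal_sin]
  set z : ℂ := 1 - (q:ℂ) * Complex.exp (2*Real.pi*Complex.I*ω) with hzdef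
  have hzre : z.re = 1 - q * Real.cos θ := by
    rw [hzdef, hexp]; simp [Complex.mul_re, Complex.mul_im, Complex.cos_ofReal_re, Complex.sin_ofReal_re]
  have hzim : z.im = - (q * Real.sin θ) := by
    rw [hzdef, hexp]; simp [Complex.mul_re, Complex.mul_im, Complex.cos_ofReal_re, Complex.sin_ofReal_re]
  have h1 : Real.sin θ ^ 2 + Real.cos θ ^ 2 = 1 := Real.sin_sq_add_cos_sq θ
  have h2 : Real.cosh s = (Real.exp s + Real.exp (-s)) / 2 := Real.cosh_eq s
  have h3 : q * Real.exp s = 1 := by rw [hqdef, ← Real.exp_add]; simp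
  have h4 : q * Real.exp (-s) = q^2 := by rw [hqdef]; ring
  have hN : Complex.normSq z = 2 * q * (Real.cosh s - Real.cos θ) := by
    rw [Complex.normSq_apply, hzre, hzim]
    linear_combination q^2 * h1 - 2*q*h2 - h3 - h4
  have hcosh1 : Real.cosh s - 1 = (1 - q)^2 / (2*q) := by
    field_simp
    linear_combination 2*q*h2 + h3 + h4
  have hA : 0 < Real.cosh s - Real.cos θ := by
    have h5 : Real.cos θ ≤ 1 := Real.cos_le_one θ
    have h6 : 1 < Real.cosh s := by rw [Real.one_lt_cosh]; exact ne_of_gt hs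
    linarith
  have hNpos : 0 < Complex.normSq z := by rw [hN]; positivity
  have hzne : z ≠ 0 := by intro h; rw [h] at hNpos; simp at hNpos
  have hratio : (Real.cosh s - 1) / (Real.cosh s - Real.cos θ)
      = (1 - q)^2 / Complex.normSq z := by
    rw [hcosh1, hN]; field_simp
  have h1q : (0:ℝ) < 1 - q := by linarith
  have hlhs : ((Real.cosh s - 1) / (Real.cosh s - Real.cos θ)) ^ α
      = (1 - q) ^ (2*α) * (Complex.normSq z) ^ (-α) := by
    rw [hratio, Real.div_rpow (by positivity) hNpos.le, Real.rpow_neg hNpos.le,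
      div_eq_mul_inv]
    congr 1
    rw [← Real.rpow_natCast (1-q) 2, ← Real.rpow_mul h1q.le]
    norm_num
  have habsG : ‖z ^ (-(α:ℂ))‖ = ‖z‖ ^ (-α) := by
    rw [Complex.norm_cpow_of_ne_zero hzne]
    simp
  have hGconj : (z ^ (-(α:ℂ))) * (starRingEnd ℂ) (z ^ (-(α:ℂ)))
      = ((Complex.normSq z ^ (-α) : ℝ) : ℂ) := by
    rw [Complex.mul_conj]
    congr 1
    rw [← Complex.sq_norm (z ^ (-(α:ℂ))), habsG, ← Complex.sq_norm z,
      ← Real.rpow_natCast (‖z‖ ^ (-α)) 2, ← Real.rpow_natCast (‖z‖) 2,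
      ← Real.rpow_mul (norm_nonneg z), ← Real.rpow_mul (norm_nonneg z)]
    congr 1
    push_cast; ring
  rw [hGconj, hlhs]
  push_cast
  ring

set_option maxHeartbeats 1000000 in
/-- The distribution of the random homology of the Brownian loop ensemble on the circle:
`∫₀¹ ((cosh s - 1)/(cosh s - cos 2πω))^α e^{-2πijω} dω = Σ_{m≥0} p_m p_{m+j}`,
where `p` is the negative binomial mass function with parameters `(α, e^{-s})`
(extended by `0` to negative integers); i.e. the integral is the probability that the
difference of two independent negative binomial variables equals `j`. -/
theorem homology_distribution_negative_binomial
    (α : ℝ) (hα : 0 < α) (s : ℝ) (hs : 0 < s) (j : ℤ)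
    (p : ℤ → ℝ)
    (hp : ∀ m : ℕ, p m =
      Real.Gamma (α + m) / (Real.Gamma α * Nat.factorial m)
        * (1 - Real.exp (-s)) ^ α * Real.exp (-s) ^ m)
    (hpneg : ∀ m : ℤ, m < 0 → p m = 0) :
    (∫ ω in (0:ℝ)..1,
        ((((Real.cosh s - 1) / (Real.cosh s - Real.cos (2 * Real.pi * ω))) ^ α : ℝ) : ℂ)
          * Complex.exp (-(2 * Real.pi * Complex.I * j * ω)))
      = ((∑' m : ℕ, p m * p (m + j) : ℝ) : ℂ) := by
  set q : ℝ := Real.exp (-s) with hqdef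
  have hq0 : 0 < q := Real.exp_pos _
  have hq1 : q < 1 := by rw [hqdef]; exact Real.exp_lt_one_iff.mpr (by linarith)
  have h1q : (0:ℝ) < 1 - q := by linarith
  set K : ℕ → ℝ := fun m => Real.Gamma (α + m) / (Real.Gamma α * m.factorial) * q ^ m with hK
  have hKpos : ∀ m, 0 < K m := by
    intro m
    have h1 : 0 < Real.Gamma (α + m) := Real.Gamma_pos_of_pos (by positivity)
    have h2 : 0 < Real.Gamma α := Real.Gamma_pos_of_pos hα
    have h3 : 0 < (m.factorial : ℝ) := by exact_mod_cast m.factorial_pos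
    rw [hK]
    positivity
  set D : ℝ := (1 - q) ^ (2*α) with hD
  have hDpos : 0 < D := Real.rpow_pos_of_pos h1q _
  -- norm of the unit exponential
  have hnorm_exp : ∀ w : ℂ, w.re = 0 → ‖Complex.exp w‖ = 1 := by
    intro w hw
    rw [Complex.norm_exp, hw, Real.exp_zero]
  -- K is summable
  have hKsumC : HasSum (fun m : ℕ => ((K m : ℝ) : ℂ)) (((1 - q) ^ (-α) : ℝ) : ℂ) := by
    have h := hasSum_binomial α hα (z := (q:ℂ)) (by
      rw [Complex.norm_real, Real.norm_of_nonneg hq0.le]; exact hq1)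
    have h2 : ((1:ℂ) - (q:ℂ)) ^ (-(α:ℂ)) = (((1 - q) ^ (-α) : ℝ) : ℂ) := by
      rw [Complex.ofReal_cpow h1q.le]
      push_cast
      ring_nf
    rw [h2] at h
    convert h using 2 with m
    rw [hK]
    push_cast
    ring
  have hKsum : HasSum K ((1 - q) ^ (-α)) := Complex.hasSum_ofReal.mp hKsumC
  -- the series for G ω
  set G : ℝ → ℂ := fun ω => (1 - (q:ℂ) * Complex.exp (2*Real.pi*Complex.I*ω)) ^ (-(α:ℂ))
    with hG
  have hGsum : ∀ ω : ℝ, HasSum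
      (fun m : ℕ => (K m : ℂ) * Complex.exp (2*Real.pi*Complex.I*m*ω)) (G ω) := by
    intro ω
    have hre : (2*(Real.pi:ℂ)*Complex.I*(ω:ℝ)).re = 0 := by simp
    have hz : ‖(q:ℂ) * Complex.exp (2*Real.pi*Complex.I*ω)‖ < 1 := by
      rw [norm_mul, hnorm_exp _ hre, mul_one, Complex.norm_real,
        Real.norm_of_nonneg hq0.le]
      exact hq1
    have h := hasSum_binomial α hα hz
    convert h using 2 with m
    rw [hK, mul_pow, ← Complex.exp_nat_mul]
    push_cast
    ring_nf
  have hGconjsum : ∀ ω : ℝ, HasSum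
      (fun m : ℕ => (K m : ℂ) * Complex.exp (-(2*Real.pi*Complex.I*m*ω)))
      ((starRingEnd ℂ) (G ω)) := by
    intro ω
    have h : HasSum (fun m : ℕ => (starRingEnd ℂ) ((K m : ℂ) * Complex.exp (2*Real.pi*Complex.I*m*ω)))
        ((starRingEnd ℂ) (G ω)) := by
      apply Complex.hasSum_conj.mpr
      rw [Complex.conj_conj]; exact hGsum ω
    convert h using 2 with m
    rw [map_mul, Complex.conj_ofReal, ← Complex.exp_conj]
    congr 1
    simp only [map_mul, Complex.conj_I, Complex.conj_ofReal, map_ofNat, map_natCast]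
    ring
  -- term function on pairs
  set F : ℕ × ℕ → ℝ → ℂ := fun mn ω =>
    ((D * K mn.1 * K mn.2 : ℝ) : ℂ)
      * Complex.exp (2 * Real.pi * Complex.I * (((mn.1 : ℤ) - mn.2 - j : ℤ) : ℂ) * ω) with hF
  have hterm_norm : ∀ mn : ℕ × ℕ, ∀ ω : ℝ, ‖F mn ω‖ = D * K mn.1 * K mn.2 := by
    intro mn ω
    rw [hF]
    simp only [norm_mul]
    rw [hnorm_exp _ (by simp), mul_one, Complex.norm_real,
      Real.norm_of_nonneg (by positivity : (0:ℝ) ≤ D * K mn.1 * K mn.2)]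
  have hsum1 : Summable fun m : ℕ => ‖(K m : ℂ)‖ := by
    have : (fun m : ℕ => ‖(K m:ℂ)‖) = K := by
      funext m
      rw [Complex.norm_real, Real.norm_of_nonneg (hKpos m).le]
    rw [this]; exact hKsum.summable
  have hFsum : ∀ ω : ℝ, HasSum (fun mn : ℕ × ℕ => F mn ω)
      (((((Real.cosh s - 1) / (Real.cosh s - Real.cos (2*Real.pi*ω))) ^ α : ℝ) : ℂ)
        * Complex.exp (-(2 * Real.pi * Complex.I * j * ω))) := by
    intro ω
    have hn1 : Summable fun m : ℕ => ‖(K m : ℂ) * Complex.exp (2*Real.pi*Complex.I*m*ω)‖ := by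
      have : (fun m : ℕ => ‖(K m:ℂ) * Complex.exp (2*Real.pi*Complex.I*m*ω)‖)
          = fun m => ‖(K m : ℂ)‖ := by
        funext m
        rw [norm_mul, hnorm_exp _ (by simp), mul_one]
      rw [this]; exact hsum1
    have hn2 : Summable fun m : ℕ => ‖(K m : ℂ) * Complex.exp (-(2*Real.pi*Complex.I*m*ω))‖ := by
      have : (fun m : ℕ => ‖(K m:ℂ) * Complex.exp (-(2*Real.pi*Complex.I*m*ω))‖)
          = fun m => ‖(K m : ℂ)‖ := by
        funext m
        rw [norm_mul, hnorm_exp _ (by simp), mul_one]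
      rw [this]; exact hsum1
    have hsummul : Summable fun x : ℕ × ℕ =>
        ((K x.1 : ℂ) * Complex.exp (2*Real.pi*Complex.I*x.1*ω))
          * ((K x.2 : ℂ) * Complex.exp (-(2*Real.pi*Complex.I*x.2*ω))) := by
      apply summable_mul_of_summable_norm hn1 hn2
    have hmul := (hGsum ω).mul (hGconjsum ω) hsummul
    have hmul2 := (hmul.mul_left ((D:ℝ):ℂ)).mul_right
      (Complex.exp (-(2 * Real.pi * Complex.I * j * ω)))
    have h3 : HasSum (fun mn : ℕ × ℕ => F mn ω)
        (((D:ℝ):ℂ) * (G ω * (starRingEnd ℂ) (G ω))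
          * Complex.exp (-(2 * Real.pi * Complex.I * j * ω))) := by
      convert hmul2 using 1
      case e'_3 => rfl
      funext mn
      simp only [hF]
      have hexp3 : Complex.exp (2*Real.pi*Complex.I*(((mn.1:ℤ) - mn.2 - j : ℤ):ℂ)*ω)
          = Complex.exp (2*Real.pi*Complex.I*mn.1*ω)
            * Complex.exp (-(2*Real.pi*Complex.I*mn.2*ω))
            * Complex.exp (-(2*Real.pi*Complex.I*j*ω)) := by
        rw [← Complex.exp_add, ← Complex.exp_add]
        congr 1
        push_cast
        ring
      rw [hexp3]
      push_cast
      ring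
    rw [integrand_eq α s hα hs ω, ← hqdef]
    exact h3
  -- integrability and summability of integrals
  have hFcont : ∀ mn : ℕ × ℕ, Continuous (F mn) := by
    intro mn
    rw [hF]
    fun_prop
  have hFint : ∀ mn : ℕ × ℕ, Integrable (F mn) (volume.restrict (Set.Ioc (0:ℝ) 1)) :=
    fun mn => (hFcont mn).integrableOn_Ioc
  have hKK : Summable (fun mn : ℕ × ℕ => D * K mn.1 * K mn.2) := by
    have h := hKsum.summable.mul_of_nonneg hKsum.summable
      (fun m => (hKpos m).le) (fun m => (hKpos m).le)
    have h2 := h.mul_left D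
    simpa [mul_assoc] using h2
  have hnorm_int : Summable (fun mn : ℕ × ℕ =>
      ∫ ω, ‖F mn ω‖ ∂(volume.restrict (Set.Ioc (0:ℝ) 1))) := by
    have heq : (fun mn : ℕ × ℕ => ∫ ω, ‖F mn ω‖ ∂(volume.restrict (Set.Ioc (0:ℝ) 1)))
        = fun mn => D * K mn.1 * K mn.2 := by
      funext mn
      simp only [hterm_norm]
      rw [integral_const]
      simp [Real.volume_Ioc]
    rw [heq]; exact hKK
  have hswap := MeasureTheory.integral_tsum_of_summable_integral_norm hFint hnorm_int
  -- per-term integral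
  have hterm_int : ∀ mn : ℕ × ℕ, (∫ ω, F mn ω ∂(volume.restrict (Set.Ioc (0:ℝ) 1)))
      = (((if ((mn.1:ℤ) - mn.2 - j) = 0 then D * K mn.1 * K mn.2 else 0 : ℝ)) : ℂ) := by
    intro mn
    have h1 : (∫ ω, F mn ω ∂(volume.restrict (Set.Ioc (0:ℝ) 1)))
        = ∫ ω in (0:ℝ)..1, F mn ω := by
      rw [intervalIntegral.integral_of_le zero_le_one]
    rw [h1, hF]
    rw [intervalIntegral.integral_const_mul, integral_E]
    split_ifs with h
    · push_cast; ring
    · push_cast; ring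
  -- the real sum identity
  have hpK : ∀ n : ℕ, p n = K n * (1 - q) ^ α := by
    intro n; rw [hp n, hK]; ring
  have hDsq : D = (1 - q) ^ α * (1 - q) ^ α := by
    rw [hD, ← Real.rpow_add h1q]; ring_nf
  have hreal : (∑' mn : ℕ × ℕ,
        (if ((mn.1:ℤ) - mn.2 - j) = 0 then D * K mn.1 * K mn.2 else 0))
      = ∑' m : ℕ, p m * p (m + j) := by
    apply tsum_eq_tsum_of_ne_zero_bij
      (i := fun x => ((((x : ℕ) : ℤ) + j).toNat, (x : ℕ)))
    · intro x y hxy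
      have h2 := congrArg Prod.snd hxy
      exact Subtype.ext h2
    · rintro ⟨m, n⟩ hmn
      simp only [Function.mem_support] at hmn
      by_cases h : ((m:ℤ) - n - j) = 0
      · have hnsupp : (fun m : ℕ => p m * p (m + j)) n ≠ 0 := by
          have hnj : ((n:ℤ) + j) = (m:ℤ) := by omega
          have hpn : p ((n:ℤ) + j) = K m * (1 - q) ^ α := by
            rw [hnj]; exact hpK m
          simp only [hpn, hpK n]
          have := hKpos n
          have := hKpos m
          have : (0:ℝ) < K n * (1-q)^α * (K m * (1-q)^α) := by positivity
          exact ne_of_gt this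
        refine ⟨⟨n, hnsupp⟩, ?_⟩
        have hm' : ((((n:ℕ):ℤ) + j).toNat) = m := by omega
        simp [hm']
      · exact absurd (if_neg h) (fun hh => hmn hh)
    · rintro ⟨n, hn⟩
      simp only [Function.mem_support] at hn
      have hnj : 0 ≤ (n:ℤ) + j := by
        by_contra hneg
        push_neg at hneg
        exact hn (by rw [hpneg _ hneg, mul_zero])
      have ht : ((((n:ℕ):ℤ) + j).toNat : ℤ) = (n:ℤ) + j := Int.toNat_of_nonneg hnj
      simp only []
      rw [if_pos (by omega)]
      have h1 : p ((n:ℤ) + j) = K ((((n:ℕ):ℤ)+j).toNat) * (1 - q) ^ α := by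
        rw [← ht]; exact hpK _
      rw [hpK n, h1, hDsq]
      ring
  -- assemble
  calc (∫ ω in (0:ℝ)..1,
        ((((Real.cosh s - 1) / (Real.cosh s - Real.cos (2 * Real.pi * ω))) ^ α : ℝ) : ℂ)
          * Complex.exp (-(2 * Real.pi * Complex.I * j * ω)))
      = ∫ ω in (0:ℝ)..1, ∑' mn : ℕ × ℕ, F mn ω := by
        apply intervalIntegral.integral_congr
        intro ω _
        exact ((hFsum ω).tsum_eq).symm
    _ = ∫ ω, (∑' mn : ℕ × ℕ, F mn ω) ∂(volume.restrict (Set.Ioc (0:ℝ) 1)) := by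
        rw [intervalIntegral.integral_of_le zero_le_one]
    _ = ∑' mn : ℕ × ℕ, ∫ ω, F mn ω ∂(volume.restrict (Set.Ioc (0:ℝ) 1)) := hswap.symm
    _ = ∑' mn : ℕ × ℕ,
        (((if ((mn.1:ℤ) - mn.2 - j) = 0 then D * K mn.1 * K mn.2 else 0 : ℝ)) : ℂ) :=
        tsum_congr hterm_int
    _ = ((∑' mn : ℕ × ℕ,
        (if ((mn.1:ℤ) - mn.2 - j) = 0 then D * K mn.1 * K mn.2 else 0) : ℝ) : ℂ) :=
        (Complex.ofReal_tsum _).symm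
    _ = ((∑' m : ℕ, p m * p (m + j) : ℝ) : ℂ) := by rw [hreal]
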